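/- (Synchronous homogeneous extension.) Let G be a simple graph on n vertices, and let θ ∈ ℝ^n be a second-order stationary point of the Kuramoto energy E_G. Let W = Q ⊎ P be disjoint nonempty vertex subsets such that: (i) every vertex i ∈ Q is adjacent to every vertex of P; (ii) for every i ∈ Q, N(i) \ P ⊆ Q. Suppose all vertices of Q are synchronized, i.e., there is a unit vector v ∈ ℝ² with v_i = v for all i ∈ Q, where v_k = (cos θ_k, sin θ_k). Then Σ_{i ∈ P} v_i is a nonnegative multiple of v: either Σ_{i ∈ P} v_i = 0 or Σ_{i ∈ P} v_i = λ v for some λ > 0. -/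

import Mathlib

open Finset

/-- The phasor of vertex `i` at state `θ`: the unit vector `(cos θᵢ, sin θᵢ) ∈ ℝ²`. -/
noncomputable def phasor {V : Type*} (θ : V → ℝ) (i : V) : ℝ × ℝ :=
  (Real.cos (θ i), Real.sin (θ i))

/-- The Kuramoto energy `E_G(θ) = (1/2)·Σ_{i,j} A_{ij}(1 − cos(θ_i − θ_j))`. -/
noncomputable def kuramotoEnergy {V : Type*} [Fintype V] (G : SimpleGraph V)
    [DecidableRel G.Adj] (θ : V → ℝ) : ℝ :=
  (1 / 2) * ∑ i, ∑ j, (if G.Adj i j then (1 : ℝ) else 0) * (1 - Real.cos (θ i - θ j))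

/-- The Hessian of the Kuramoto energy at `θ`: off-diagonal entries
`−A_{ij} cos(θ_i − θ_j)` and diagonal entries `Σ_{k ≠ i} A_{ik} cos(θ_i − θ_k)`. -/
noncomputable def kuramotoHessian {V : Type*} [Fintype V] [DecidableEq V] (G : SimpleGraph V)
    [DecidableRel G.Adj] (θ : V → ℝ) : Matrix V V ℝ :=
  Matrix.of fun i j =>
    if i = j then ∑ k ∈ Finset.univ.erase i, (if G.Adj i k then Real.cos (θ i - θ k) else 0)
    else -(if G.Adj i j then Real.cos (θ i - θ j) else 0)

/-- `θ` is a second-order stationary point of the Kuramoto energy: the gradient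
`(∇E_G(θ))_i = Σ_j A_{ij} sin(θ_i − θ_j)` vanishes and the Hessian is positive
semidefinite. -/
def IsSOSP {V : Type*} [Fintype V] [DecidableEq V] (G : SimpleGraph V)
    [DecidableRel G.Adj] (θ : V → ℝ) : Prop :=
  (∀ i, ∑ j, (if G.Adj i j then (1 : ℝ) else 0) * Real.sin (θ i - θ j) = 0) ∧
  (kuramotoHessian G θ).PosSemidef

/-- **Synchronous homogeneous extension.** Let `θ` be a second-order stationary point of
the Kuramoto energy, and let `Q, P` be disjoint nonempty vertex subsets such that every
vertex of `Q` is adjacent to every vertex of `P`, and `N(i) \ P ⊆ Q` for every `i ∈ Q`.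
If all phasors of `Q` equal a common unit vector `v`, then `Σ_{i ∈ P} v_i` is a
nonnegative multiple of `v`: either it vanishes or it equals `λ • v` for some `λ > 0`. -/
theorem stmt_10 {n : ℕ} (G : SimpleGraph (Fin n)) [DecidableRel G.Adj] (θ : Fin n → ℝ)
    (hθ : IsSOSP G θ)
    (Q P : Finset (Fin n)) (hQ : Q.Nonempty) (hP : P.Nonempty) (hdisj : Disjoint Q P)
    (hQP : ∀ i ∈ Q, ∀ p ∈ P, G.Adj i p)
    (hQQ : ∀ i ∈ Q, G.neighborFinset i \ P ⊆ Q)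
    (v : ℝ × ℝ) (hv : v.1 ^ 2 + v.2 ^ 2 = 1)
    (hsync : ∀ i ∈ Q, phasor θ i = v) :
    (∑ i ∈ P, phasor θ i = 0) ∨ ∃ lam : ℝ, 0 < lam ∧ ∑ i ∈ P, phasor θ i = lam • v := by
  classical
  obtain ⟨i₀, hi₀⟩ := hQ
  set S1 := ∑ p ∈ P, Real.cos (θ p) with hS1
  set S2 := ∑ p ∈ P, Real.sin (θ p) with hS2
  have hcos : ∀ i ∈ Q, Real.cos (θ i) = v.1 := fun i hi => congrArg Prod.fst (hsync i hi)
  have hsin : ∀ i ∈ Q, Real.sin (θ i) = v.2 := fun i hi => congrArg Prod.snd (hsync i hi)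
  have hQnotP : ∀ i ∈ Q, i ∉ P := fun i hi => Finset.disjoint_left.mp hdisj hi
  have hPnotQ : ∀ p ∈ P, p ∉ Q := fun p hp => Finset.disjoint_right.mp hdisj hp
  -- cos of the difference of two synchronized angles is 1
  have hcos1 : ∀ i ∈ Q, ∀ j ∈ Q, Real.cos (θ i - θ j) = 1 := by
    intro i hi j hj
    rw [Real.cos_sub, hcos i hi, hcos j hj, hsin i hi, hsin j hj]
    linear_combination hv
  -- the gradient condition at any i ∈ Q
  have hgrad : v.2 * S1 - v.1 * S2 = 0 := by
    have h := hθ.1 i₀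
    have hterm : ∀ j, (if G.Adj i₀ j then (1 : ℝ) else 0) * Real.sin (θ i₀ - θ j)
        = if j ∈ P then v.2 * Real.cos (θ j) - v.1 * Real.sin (θ j) else 0 := by
      intro j
      by_cases hjP : j ∈ P
      · rw [if_pos (hQP i₀ hi₀ j hjP), if_pos hjP, one_mul, Real.sin_sub,
          hcos i₀ hi₀, hsin i₀ hi₀]
      · by_cases hadj : G.Adj i₀ j
        · have hjQ : j ∈ Q := hQQ i₀ hi₀ (by
            simp [Finset.mem_sdiff, SimpleGraph.mem_neighborFinset, hadj, hjP])
          rw [if_pos hadj, if_neg hjP, one_mul, Real.sin_sub, hcos i₀ hi₀, hsin i₀ hi₀,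
            hcos j hjQ, hsin j hjQ]
          ring
        · simp [hadj, hjP]
    rw [Finset.sum_congr rfl (fun j _ => hterm j), Finset.sum_ite_mem,
      Finset.univ_inter, Finset.sum_sub_distrib, ← Finset.mul_sum, ← Finset.mul_sum] at h
    exact h
  set lam := v.1 * S1 + v.2 * S2 with hlam
  have hSv1 : S1 = lam * v.1 := by
    rw [hlam]; linear_combination (-S1) * hv + v.2 * hgrad
  have hSv2 : S2 = lam * v.2 := by
    rw [hlam]; linear_combination (-S2) * hv + (-v.1) * hgrad
  -- the sum of phasors over P
  have hsum : ∑ i ∈ P, phasor θ i = lam • v := by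
    have h1 : (∑ i ∈ P, phasor θ i).1 = S1 := by
      rw [Prod.fst_sum]; rfl
    have h2 : (∑ i ∈ P, phasor θ i).2 = S2 := by
      rw [Prod.snd_sum]; rfl
    apply Prod.ext
    · rw [h1, hSv1]; rfl
    · rw [h2, hSv2]; rfl
  -- the Hessian row sums over Q
  have hrow : ∀ i ∈ Q, ∑ j, kuramotoHessian G θ i j * (if j ∈ Q then (1 : ℝ) else 0) = lam := by
    intro i hi
    have hstep1 : ∑ j, kuramotoHessian G θ i j * (if j ∈ Q then (1 : ℝ) else 0)
        = ∑ j ∈ Q, kuramotoHessian G θ i j := by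
      rw [← Finset.univ_inter Q, ← Finset.sum_ite_mem]
      exact Finset.sum_congr rfl fun j _ => by by_cases hj : j ∈ Q <;> simp [hj]
    rw [hstep1, ← Finset.add_sum_erase Q _ hi]
    -- the diagonal entry
    have hdiag : kuramotoHessian G θ i i
        = (∑ p ∈ P, Real.cos (θ i - θ p))
          + ∑ j ∈ Q.erase i, (if G.Adj i j then (1 : ℝ) else 0) := by
      show (if i = i then ∑ k ∈ Finset.univ.erase i, (if G.Adj i k then Real.cos (θ i - θ k) else 0)
        else -(if G.Adj i i then Real.cos (θ i - θ i) else 0)) = _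
      rw [if_pos rfl]
      have hterm : ∀ k ∈ Finset.univ.erase i,
          (if G.Adj i k then Real.cos (θ i - θ k) else 0)
          = (if k ∈ P then Real.cos (θ i - θ k) else 0)
            + (if k ∈ Q.erase i then (if G.Adj i k then (1 : ℝ) else 0) else 0) := by
        intro k hk
        have hki : k ≠ i := Finset.ne_of_mem_erase hk
        by_cases hkP : k ∈ P
        · have : k ∉ Q.erase i := fun h => hPnotQ k hkP (Finset.mem_of_mem_erase h)
          rw [if_pos (hQP i hi k hkP), if_pos hkP, if_neg this]
          ring
        · by_cases hadj : G.Adj i k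
          · have hkQ : k ∈ Q := hQQ i hi (by
              simp [Finset.mem_sdiff, SimpleGraph.mem_neighborFinset, hadj, hkP])
            rw [if_pos hadj, if_neg hkP, if_pos (Finset.mem_erase.mpr ⟨hki, hkQ⟩),
              if_pos hadj, hcos1 i hi k hkQ]
            ring
          · simp [hadj, hkP]
      have e1 : (Finset.univ.erase i) ∩ P = P := by
        apply Finset.inter_eq_right.mpr
        intro p hp
        exact Finset.mem_erase.mpr ⟨fun he => hQnotP i hi (he ▸ hp), Finset.mem_univ p⟩
      have e2 : (Finset.univ.erase i) ∩ (Q.erase i) = Q.erase i := by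
        apply Finset.inter_eq_right.mpr
        intro k hk
        exact Finset.mem_erase.mpr ⟨Finset.ne_of_mem_erase hk, Finset.mem_univ k⟩
      rw [Finset.sum_congr rfl hterm, Finset.sum_add_distrib, Finset.sum_ite_mem,
        Finset.sum_ite_mem, e1, e2]
    -- off-diagonal entries within Q
    have hoff : ∑ j ∈ Q.erase i, kuramotoHessian G θ i j
        = -∑ j ∈ Q.erase i, (if G.Adj i j then (1 : ℝ) else 0) := by
      rw [← Finset.sum_neg_distrib]
      apply Finset.sum_congr rfl
      intro j hj
      have hji : j ≠ i := Finset.ne_of_mem_erase hj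
      have hjQ : j ∈ Q := Finset.mem_of_mem_erase hj
      show (if i = j then _ else -(if G.Adj i j then Real.cos (θ i - θ j) else 0)) = _
      rw [if_neg (fun h => hji h.symm), hcos1 i hi j hjQ]
    rw [hdiag, hoff]
    have hP : ∀ p ∈ P, Real.cos (θ i - θ p) = v.1 * Real.cos (θ p) + v.2 * Real.sin (θ p) := by
      intro p _
      rw [Real.cos_sub, hcos i hi, hsin i hi]
    rw [Finset.sum_congr rfl hP, Finset.sum_add_distrib, ← Finset.mul_sum, ← Finset.mul_sum]
    ring
  -- apply positive semidefiniteness to the indicator of Q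
  have hlam0 : 0 ≤ lam := by
    have hpsd := hθ.2.dotProduct_mulVec_nonneg (fun i => if i ∈ Q then (1 : ℝ) else 0)
    have hstar : star (fun i : Fin n => if i ∈ Q then (1 : ℝ) else 0)
        = fun i => if i ∈ Q then (1 : ℝ) else 0 := by
      ext i; simp
    rw [hstar] at hpsd
    have hform : dotProduct (fun i : Fin n => if i ∈ Q then (1 : ℝ) else 0)
        ((kuramotoHessian G θ).mulVec fun i => if i ∈ Q then (1 : ℝ) else 0)
        = (Q.card : ℝ) * lam := by
      unfold dotProduct Matrix.mulVec dotProduct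
      have : ∀ i, (if i ∈ Q then (1 : ℝ) else 0)
          * (∑ j, kuramotoHessian G θ i j * (if j ∈ Q then (1 : ℝ) else 0))
          = if i ∈ Q then lam else 0 := by
        intro i
        by_cases hi : i ∈ Q
        · rw [if_pos hi, if_pos hi, one_mul, hrow i hi]
        · rw [if_neg hi, if_neg hi, zero_mul]
      rw [Finset.sum_congr rfl (fun i _ => this i), Finset.sum_ite_mem, Finset.univ_inter,
        Finset.sum_const, nsmul_eq_mul]
    rw [hform] at hpsd
    have hQpos : (0 : ℝ) < Q.card := by
      have := Finset.card_pos.mpr ⟨i₀, hi₀⟩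
      exact_mod_cast this
    nlinarith
  rcases lt_or_eq_of_le hlam0 with h | h
  · exact Or.inr ⟨lam, h, hsum⟩
  · left
    rw [hsum, ← h, zero_smul]
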